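/- Let w_j = (-1)^{j(j-1)/2} for j ∈ ℤ. Then for every even integer u and every finite set S of consecutive integers, |∑_{j∈S} w_j w_{u-j}| ≤ 1. -/

import Mathlib

private lemma neg_one_zpow_congr {m n : ℤ} (h : Even (m - n)) :
    (-1 : ℝ) ^ m = (-1 : ℝ) ^ n := by
  obtain ⟨k, hk⟩ := h
  have hm : m = n + 2 * k := by omega
  rw [hm, zpow_add₀ (by norm_num : (-1:ℝ) ≠ 0), zpow_mul]
  norm_num

private lemma sum_neg_one_zpow (a b : ℤ) (h : a ≤ b) :
    ∑ j ∈ Finset.Ico a b, (-1 : ℝ) ^ j = ((-1:ℝ)^a - (-1:ℝ)^b) / 2 := by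
  refine Int.le_induction (motive := fun b _ => ∑ j ∈ Finset.Ico a b, (-1:ℝ)^j = ((-1:ℝ)^a - (-1:ℝ)^b)/2) ?_ ?_ b h
  · simp
  · intro n hn ih
    have hset : Finset.Ico a (n+1) = insert n (Finset.Ico a n) := by
      ext x; simp only [Finset.mem_Ico, Finset.mem_insert]; omega
    rw [hset, Finset.sum_insert (by simp), ih,
      zpow_add_one₀ (by norm_num : (-1:ℝ) ≠ 0)]
    ring

private lemma abs_neg_one_zpow' (n : ℤ) : |(-1 : ℝ) ^ n| = 1 := by
  rcases Int.even_or_odd n with h | h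
  · rw [h.neg_one_zpow]; norm_num
  · rw [h.neg_one_zpow]; norm_num

theorem negaperiodic_weight_even_reflect_sum_bound
    (w : ℤ → ℝ) (hw : ∀ j : ℤ, w j = (-1 : ℝ) ^ (j * (j - 1) / 2))
    (u : ℤ) (hu : Even u) (a b : ℤ) :
    |∑ j ∈ Finset.Ico a b, w j * w (u - j)| ≤ 1 := by
  have key : ∀ j : ℤ, w j * w (u - j) = (-1:ℝ)^(u*(u-1)/2) * (-1:ℝ)^j := by
    intro j
    rw [hw, hw, ← zpow_add₀ (by norm_num : (-1:ℝ) ≠ 0),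
        ← zpow_add₀ (by norm_num : (-1:ℝ) ≠ 0)]
    apply neg_one_zpow_congr
    set p := j * (j - 1) / 2 with hp
    set q := (u - j) * (u - j - 1) / 2 with hq
    set r := u * (u - 1) / 2 with hr
    have h1 : 2 * p = j * (j - 1) :=
      Int.two_mul_ediv_two_of_even (by rw [mul_comm]; simpa using Int.even_mul_succ_self (j - 1))
    have h2 : 2 * q = (u - j) * (u - j - 1) :=
      Int.two_mul_ediv_two_of_even (by rw [mul_comm]; simpa using Int.even_mul_succ_self (u - j - 1))
    have h3 : 2 * r = u * (u - 1) :=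
      Int.two_mul_ediv_two_of_even (by rw [mul_comm]; simpa using Int.even_mul_succ_self (u - 1))
    have he : 2 * p + 2 * q = 2 * (j * j) - 2 * (u * j) + 2 * r := by
      rw [h1, h2, h3]; ring
    have e : p + q = j * j - u * j + r := by linarith
    have hgoal : p + q - (r + j) = j * (j - u - 1) := by rw [e]; ring
    rw [hgoal]
    rcases Int.even_or_odd j with hj | hj
    · exact hj.mul_right _
    · apply Even.mul_left
      obtain ⟨v, rfl⟩ := hu
      obtain ⟨k, rfl⟩ := hj
      exact ⟨k - v, by ring⟩
  simp only [key]
  rw [← Finset.mul_sum, abs_mul, abs_neg_one_zpow', one_mul]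
  rcases le_or_gt a b with h | h
  · rw [sum_neg_one_zpow a b h]
    have ha := abs_neg_one_zpow' a
    have hb := abs_neg_one_zpow' b
    rw [abs_div]
    have := abs_sub ((-1:ℝ)^a) ((-1:ℝ)^b)
    rw [ha, hb] at this
    norm_num
    linarith
  · rw [Finset.Ico_eq_empty (by omega)]
    simp
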